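/- Let γ, τ, a > 0 with ε = γτ, let Z_ε = 3εℤ ∪ ε(3ℤ + 1), let x ∈ Z_ε, and assume 1/a ∉ γ((ℤ + 1/2) ∪ (ℤ + 2)). Consider the minimizers over Z_ε of F(u) = −u + a(u − x)²/(2τ). Then: (i) if a > 2/γ, the unique minimizer is x; (ii) if 1/γ < a < 2/γ, the unique minimizer is x + ε when x + ε ∈ Z_ε, and is x when x + ε ∉ Z_ε; (iii) if a < 1/γ, every minimizer is strictly greater than x. -/

import Mathlib

def Zlat (ε : ℝ) : Set ℝ := {u : ℝ | ∃ k : ℤ, u = 3 * ε * k ∨ u = ε * (3 * k + 1)}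

def minSet (ε τ a x : ℝ) : Set ℝ :=
  {y : ℝ | y ∈ Zlat ε ∧ ∀ u ∈ Zlat ε,
    -y + a * (y - x) ^ 2 / (2 * τ) ≤ -u + a * (u - x) ^ 2 / (2 * τ)}

lemma mem_zlat_iff (ε u : ℝ) :
    u ∈ Zlat ε ↔ ∃ n : ℤ, (∃ k : ℤ, n = 3 * k ∨ n = 3 * k + 1) ∧ u = ε * n := by
  constructor
  · rintro ⟨k, h | h⟩
    · exact ⟨3 * k, ⟨k, Or.inl rfl⟩, by push_cast; linarith⟩
    · exact ⟨3 * k + 1, ⟨k, Or.inr rfl⟩, by push_cast; linarith⟩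
  · rintro ⟨n, ⟨k, rfl | rfl⟩, rfl⟩
    · exact ⟨k, Or.inl (by push_cast; ring)⟩
    · exact ⟨k, Or.inr (by push_cast; ring)⟩

lemma gpos_big {b : ℝ} (hb : 2 < b) (d : ℤ) (hd : d ≠ 0) :
    0 < b * (d : ℝ) ^ 2 / 2 - d := by
  rcases lt_or_gt_of_ne hd with h | h
  · have h2 : d ≤ -1 := by omega
    have h1 : (d : ℝ) ≤ -1 := by exact_mod_cast h2
    nlinarith
  · have h1 : (1 : ℝ) ≤ d := by exact_mod_cast h
    have h3 : (2 : ℝ) < b * d := by nlinarith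
    nlinarith

lemma g1_lt {b : ℝ} (hb1 : 1 < b) (hb2 : b < 2) (d : ℤ) (hd : d ≠ 1) :
    b * 1 ^ 2 / 2 - 1 < b * (d : ℝ) ^ 2 / 2 - d := by
  rcases le_or_gt d 0 with h | h
  · have h1 : (d : ℝ) ≤ 0 := by exact_mod_cast h
    nlinarith
  · have h2 : (2 : ℤ) ≤ d := by omega
    have h1 : (2 : ℝ) ≤ d := by exact_mod_cast h2
    nlinarith

lemma gpos_mid {b : ℝ} (hb1 : 1 < b) (d : ℤ) (hd0 : d ≠ 0) (hd1 : d ≠ 1) :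
    0 < b * (d : ℝ) ^ 2 / 2 - d := by
  rcases le_or_gt d 0 with h | h
  · have h2 : d ≤ -1 := by omega
    have h1 : (d : ℝ) ≤ -1 := by exact_mod_cast h2
    nlinarith
  · have h2 : (2 : ℤ) ≤ d := by omega
    have h1 : (2 : ℝ) ≤ d := by exact_mod_cast h2
    have h3 : (2 : ℝ) < b * d := by nlinarith
    nlinarith

lemma gnonneg {b : ℝ} (hb : 0 < b) (d : ℤ) (hd : d ≤ 0) :
    0 ≤ b * (d : ℝ) ^ 2 / 2 - d := by
  have h1 : (d : ℝ) ≤ 0 := by exact_mod_cast hd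
  nlinarith

theorem stmt_7 (γ τ a ε : ℝ) (hγ : 0 < γ) (hτ : 0 < τ) (ha : 0 < a) (hε : ε = γ * τ)
    (x : ℝ) (hx : x ∈ Zlat ε)
    (hna : ¬ ∃ k : ℤ, 1 / a = γ * ((k : ℝ) + 1 / 2) ∨ 1 / a = γ * ((k : ℝ) + 2)) :
    ((2 / γ < a) → minSet ε τ a x = {x}) ∧
    ((1 / γ < a ∧ a < 2 / γ) →
      ((x + ε ∈ Zlat ε → minSet ε τ a x = {x + ε}) ∧
       (x + ε ∉ Zlat ε → minSet ε τ a x = {x}))) ∧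
    ((a < 1 / γ) → ∀ y ∈ minSet ε τ a x, x < y) := by
  subst hε
  set ε := γ * τ with hε
  have hεpos : 0 < ε := mul_pos hγ hτ
  obtain ⟨m, hm3, rfl⟩ := (mem_zlat_iff ε x).mp hx
  set b := a * γ with hb
  have hbpos : 0 < b := mul_pos ha hγ
  -- the value identity
  have hFval : ∀ n : ℤ, -(ε * n) + a * (ε * n - ε * m) ^ 2 / (2 * τ)
      = -(ε * m) + ε * (b * ((n : ℝ) - m) ^ 2 / 2 - ((n : ℝ) - m)) := by
    intro n
    field_simp [hε, hb]
    ring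
  have hεinj : ∀ p n : ℤ, ε * (p : ℝ) = ε * n → p = n := by
    intro p n h
    have := mul_left_cancel₀ (ne_of_gt hεpos) h
    exact_mod_cast this
  have Fcomp : ∀ p n : ℤ,
      (-(ε * p) + a * (ε * p - ε * m) ^ 2 / (2 * τ) ≤ -(ε * n) + a * (ε * n - ε * m) ^ 2 / (2 * τ))
      ↔ (b * ((p : ℝ) - m) ^ 2 / 2 - ((p : ℝ) - m) ≤ b * ((n : ℝ) - m) ^ 2 / 2 - ((n : ℝ) - m)) := by
    intro p n
    rw [hFval, hFval, add_le_add_iff_left, mul_le_mul_iff_right₀ hεpos]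
  have cast_sub : ∀ p : ℤ, ((p : ℝ) - m) = (((p - m : ℤ) : ℝ)) := by intro p; push_cast; ring
  refine ⟨?_, ?_, ?_⟩
  · -- case a > 2/γ
    intro hA
    have hb2 : 2 < b := by rw [hb]; rw [div_lt_iff₀ hγ] at hA; linarith
    ext y
    simp only [Set.mem_singleton_iff]
    constructor
    · rintro ⟨hy, hmin⟩
      obtain ⟨p, hp3, rfl⟩ := (mem_zlat_iff ε y).mp hy
      have := hmin (ε * m) hx
      rw [show -(ε * (p:ℝ)) = -(ε * (p:ℝ)) from rfl] at this
      rw [Fcomp p m] at this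
      by_contra hne
      have hpm : p - m ≠ 0 := by
        intro h; apply hne; congr 1; exact_mod_cast (by omega : p = m)
      have hpos := gpos_big hb2 (p - m) hpm
      rw [cast_sub p] at this
      simp only [sub_self] at this
      push_cast at this hpos
      nlinarith
    · rintro rfl
      refine ⟨hx, ?_⟩
      intro u hu
      obtain ⟨n, hn3, rfl⟩ := (mem_zlat_iff ε u).mp hu
      rw [Fcomp m n]
      rcases eq_or_ne n m with rfl | hne
      · exact le_rfl
      · have hnm : n - m ≠ 0 := by omega
        have hpos := gpos_big hb2 (n - m) hnm
        rw [cast_sub n]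
        simp only [sub_self]
        push_cast at hpos ⊢
        nlinarith
  · -- case 1/γ < a < 2/γ
    rintro ⟨hA1, hA2⟩
    have hb1 : 1 < b := by rw [hb]; rw [div_lt_iff₀ hγ] at hA1; linarith
    have hb2 : b < 2 := by rw [hb]; rw [lt_div_iff₀ hγ] at hA2; linarith
    have hxe : ε * (m : ℝ) + ε = ε * ((m + 1 : ℤ) : ℝ) := by push_cast; ring
    constructor
    · intro hx1
      ext y
      simp only [Set.mem_singleton_iff]
      constructor
      · rintro ⟨hy, hmin⟩
        obtain ⟨p, hp3, rfl⟩ := (mem_zlat_iff ε y).mp hy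
        have := hmin (ε * m + ε) hx1
        rw [hxe, Fcomp p (m + 1)] at this
        by_contra hne
        have hpm1 : p - m ≠ 1 := by
          intro h
          apply hne
          rw [hxe]
          congr 1
          exact_mod_cast (by omega : p = m + 1)
        have hlt := g1_lt hb1 hb2 (p - m) hpm1
        rw [cast_sub p] at this
        push_cast at this hlt
        nlinarith
      · rintro rfl
        refine ⟨hx1, ?_⟩
        intro u hu
        obtain ⟨n, hn3, rfl⟩ := (mem_zlat_iff ε u).mp hu
        rw [hxe, Fcomp (m + 1) n]
        rcases eq_or_ne n (m + 1) with rfl | hne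
        · exact le_rfl
        · have hnm1 : n - m ≠ 1 := by omega
          have hlt := g1_lt hb1 hb2 (n - m) hnm1
          rw [cast_sub n]
          push_cast at hlt ⊢
          nlinarith
    · intro hx1
      -- any lattice point ε * n has n ≠ m + 1
      have hnot : ∀ n : ℤ, (∃ k : ℤ, n = 3 * k ∨ n = 3 * k + 1) → n ≠ m + 1 := by
        intro n hn hcon
        apply hx1
        rw [hxe, ← hcon]
        exact (mem_zlat_iff ε _).mpr ⟨n, hn, rfl⟩
      ext y
      simp only [Set.mem_singleton_iff]
      constructor
      · rintro ⟨hy, hmin⟩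
        obtain ⟨p, hp3, rfl⟩ := (mem_zlat_iff ε y).mp hy
        have := hmin (ε * m) hx
        rw [Fcomp p m] at this
        by_contra hne
        have hpm : p - m ≠ 0 := by
          intro h; apply hne; congr 1; exact_mod_cast (by omega : p = m)
        have hpm1 : p - m ≠ 1 := by
          have := hnot p hp3; omega
        have hpos := gpos_mid hb1 (p - m) hpm hpm1
        rw [cast_sub p] at this
        simp only [sub_self] at this
        push_cast at this hpos
        nlinarith
      · rintro rfl
        refine ⟨hx, ?_⟩
        intro u hu
        obtain ⟨n, hn3, rfl⟩ := (mem_zlat_iff ε u).mp hu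
        rw [Fcomp m n]
        rcases eq_or_ne n m with rfl | hne
        · exact le_rfl
        · have hnm : n - m ≠ 0 := by omega
          have hnm1 : n - m ≠ 1 := by
            have := hnot n hn3; omega
          have hpos := gpos_mid hb1 (n - m) hnm hnm1
          rw [cast_sub n]
          simp only [sub_self]
          push_cast at hpos ⊢
          nlinarith
  · -- case a < 1/γ
    intro hA
    have hb1 : b < 1 := by rw [hb]; rw [lt_div_iff₀ hγ] at hA; linarith
    rintro y ⟨hy, hmin⟩
    obtain ⟨p, hp3, rfl⟩ := (mem_zlat_iff ε y).mp hy
    -- a witness point strictly better than x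
    have hwit : ∃ w : ℤ, w ∈ ({1, 2} : Set ℤ) ∧ (∃ k : ℤ, m + w = 3 * k ∨ m + w = 3 * k + 1) := by
      obtain ⟨k, hk | hk⟩ := hm3
      · exact ⟨1, by simp, ⟨k, Or.inr (by omega)⟩⟩
      · exact ⟨2, by simp, ⟨k + 1, Or.inl (by omega)⟩⟩
    obtain ⟨w, hw12, hwmem⟩ := hwit
    have hwZ : ε * ((m + w : ℤ) : ℝ) ∈ Zlat ε := (mem_zlat_iff ε _).mpr ⟨m + w, hwmem, rfl⟩
    have h1 := hmin _ hwZ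
    rw [Fcomp p (m + w)] at h1
    have hgw : b * (((m + w : ℤ) : ℝ) - m) ^ 2 / 2 - (((m + w : ℤ) : ℝ) - m) < 0 := by
      simp only [Set.mem_insert_iff, Set.mem_singleton_iff] at hw12
      rcases hw12 with rfl | rfl <;> push_cast <;> nlinarith
    have hneg : b * ((p : ℝ) - m) ^ 2 / 2 - ((p : ℝ) - m) < 0 := lt_of_le_of_lt h1 hgw
    by_contra hle
    push_neg at hle
    have hpm : p ≤ m := by
      have h2 := (mul_le_mul_iff_right₀ hεpos).mp hle
      exact_mod_cast h2
    have hnn := gnonneg hbpos (p - m) (by omega)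
    rw [cast_sub p] at hneg
    linarith
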